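/- Let G be a linearly ordered commutative group, X a set, and f₁, …, f_k : X → G finitely many functions (k ≥ 1). Let f(x) := f₁(x) ⊔ … ⊔ f_k(x) (pointwise maximum) and f̃(x) := |f₁(x)| ⊓ … ⊓ |f_k(x)| (pointwise minimum of absolute values, where |a| := a ⊔ a⁻¹). Then Skel(f) = Skel(f̃) if and only if for every index i and every x ∈ X, f_i(x) = 1 implies f_j(x) ≤ 1 for all indices j. -/

import Mathlib

private lemma abs_eq_one' {G : Type*} [CommGroup G] [LinearOrder G] [IsOrderedMonoid G] {a : G} :
    a ⊔ a⁻¹ = 1 ↔ a = 1 := by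
  constructor
  · intro h
    have h1 : a ≤ 1 := h ▸ le_sup_left
    have h2 : a⁻¹ ≤ 1 := h ▸ le_sup_right
    exact le_antisymm h1 (inv_le_one'.mp h2)
  · rintro rfl; simp

/-- For a finite nonempty family `f i : X → G` of functions to a linearly ordered
commutative group, the skeleton of the pointwise maximum `⊔ᵢ fᵢ` equals the skeleton of
the pointwise minimum `⊓ᵢ |fᵢ|` (with `|a| = a ⊔ a⁻¹`) if and only if whenever some
`fᵢ(x) = 1`, all `fⱼ(x) ≤ 1`. -/
theorem skel_sup_eq_skel_inf_abs_iff {G X : Type*} [CommGroup G] [LinearOrder G] [IsOrderedMonoid G]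
    {ι : Type*} [Fintype ι] [Nonempty ι] (f : ι → X → G) :
    ({x : X | (Finset.univ.sup' Finset.univ_nonempty fun i => f i x) = 1}
        = {x : X | (Finset.univ.inf' Finset.univ_nonempty fun i => f i x ⊔ (f i x)⁻¹) = 1})
      ↔ ∀ (i : ι) (x : X), f i x = 1 → ∀ j : ι, f j x ≤ 1 := by
  have one_le_abs : ∀ a : G, (1 : G) ≤ a ⊔ a⁻¹ := fun a => by
    rcases le_total a 1 with h | h
    · exact le_sup_of_le_right (one_le_inv'.mpr h)
    · exact le_sup_of_le_left h
  have inf_one : ∀ x, ((Finset.univ.inf' Finset.univ_nonempty fun i => f i x ⊔ (f i x)⁻¹) = 1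
      ↔ ∃ i, f i x = 1) := by
    intro x
    constructor
    · intro h
      obtain ⟨i, -, hi⟩ := Finset.exists_mem_eq_inf' Finset.univ_nonempty
        (fun i => f i x ⊔ (f i x)⁻¹)
      exact ⟨i, abs_eq_one'.mp (by rw [← hi]; exact h)⟩
    · rintro ⟨i, hi⟩
      refine le_antisymm ?_ (Finset.le_inf' _ _ fun j _ => one_le_abs _)
      have := Finset.inf'_le (fun j => f j x ⊔ (f j x)⁻¹) (Finset.mem_univ i)
      simp only [hi, inv_one, sup_idem] at this; exact this
  constructor
  · intro h i x hix j
    have hx : x ∈ {x : X | (Finset.univ.inf' Finset.univ_nonempty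
        fun i => f i x ⊔ (f i x)⁻¹) = 1} := (inf_one x).mpr ⟨i, hix⟩
    have : (Finset.univ.sup' Finset.univ_nonempty fun i => f i x) = 1 := by
      rw [← h] at hx; exact hx
    calc f j x ≤ _ := Finset.le_sup' (fun i => f i x) (Finset.mem_univ j)
    _ = 1 := this
  · intro h
    ext x
    simp only [Set.mem_setOf_eq, inf_one x]
    constructor
    · intro hs
      obtain ⟨i, -, hi⟩ := Finset.exists_mem_eq_sup' Finset.univ_nonempty (fun i => f i x)
      exact ⟨i, (hi ▸ hs : f i x = 1)⟩
    · rintro ⟨i, hi⟩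
      refine le_antisymm (Finset.sup'_le _ _ fun j _ => h i x hi j) ?_
      have := Finset.le_sup' (fun i => f i x) (Finset.mem_univ i); simp only [hi] at this; exact this
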